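/- Let c^{m} ∈ ℝ^{s_m} have pairwise distinct entries with Lagrange basis polynomials L_j, and let A^{m,m} ∈ ℝ^{s_m × s_m} satisfy the stage-order condition C(η): ∑_{j} A^{m,m}_{n,j} (c^{m}_j)^{k−1} = (c^{m}_n)^k / k for all n and all 1 ≤ k ≤ η. Let c^{l} ∈ ℝ^{s_l} and define A = L(c^{l}) A^{m,m} with L(c^{l})_{i,j} = L_j(c^{l}_i). Then ∑_{j=1}^{s_m} A_{i,j} (c^{m}_j)^{k−1} = (c^{l}_i)^k / k for all i and all 1 ≤ k ≤ min{η, s_m − 1}. -/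
import Mathlib


open Matrix

/-- Lagrange basis polynomial for the nodes `c`. -/
noncomputable def lagrangeBasis {s : ℕ} (c : Fin s → ℝ) (j : Fin s) (t : ℝ) : ℝ :=
  ∏ k ∈ Finset.univ.erase j, (t - c k) / (c j - c k)

lemma lagrangeBasis_eq_eval {s : ℕ} (c : Fin s → ℝ) (j : Fin s) (t : ℝ) :
    lagrangeBasis c j t = (Lagrange.basis Finset.univ c j).eval t := by
  rw [lagrangeBasis, Lagrange.basis, Polynomial.eval_prod]
  refine Finset.prod_congr rfl fun k _ => ?_
  simp [Lagrange.basisDivisor, div_eq_inv_mul, mul_comm]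

lemma lagrange_exact {s : ℕ} (c : Fin s → ℝ) (hc : Function.Injective c)
    (k : ℕ) (hk : k < s) (t : ℝ) :
    ∑ j, lagrangeBasis c j t * (c j) ^ k = t ^ k := by
  have h := Lagrange.eq_interpolate (s := (Finset.univ : Finset (Fin s))) (v := c)
    hc.injOn (f := Polynomial.X ^ k) ?_
  · have := congrArg (Polynomial.eval t) h
    simp only [Lagrange.interpolate_apply, Polynomial.eval_finset_sum, Polynomial.eval_mul,
      Polynomial.eval_C, Polynomial.eval_pow, Polynomial.eval_X] at this
    rw [this]
    refine Finset.sum_congr rfl fun j _ => ?_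
    rw [lagrangeBasis_eq_eval, mul_comm]
  · simp only [Polynomial.degree_X_pow, Finset.card_univ, Fintype.card_fin]
    exact_mod_cast hk

/-- The interpolation transfer matrix inherits the stage-order condition
`C` up to `min{η, s_m − 1}` from the diagonal method. -/
theorem interpolation_transfer_stage_order (sm sl : ℕ) (η : ℕ)
    (cm : Fin sm → ℝ) (hcm : Function.Injective cm)
    (Amm : Matrix (Fin sm) (Fin sm) ℝ)
    (hC : ∀ (n : Fin sm) (k : ℕ), 1 ≤ k → k ≤ η →
      ∑ j, Amm n j * (cm j) ^ (k - 1) = (cm n) ^ k / (k : ℝ))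
    (cl : Fin sl → ℝ)
    (A : Matrix (Fin sl) (Fin sm) ℝ)
    (hA : A = (Matrix.of fun i j => lagrangeBasis cm j (cl i)) * Amm) :
    ∀ (i : Fin sl) (k : ℕ), 1 ≤ k → k ≤ min η (sm - 1) →
      ∑ j, A i j * (cm j) ^ (k - 1) = (cl i) ^ k / (k : ℝ) := by
  intro i k hk1 hk2
  rw [le_min_iff] at hk2
  obtain ⟨hkη, hksm⟩ := hk2
  have hsm : 1 ≤ sm := by
    by_contra h
    push_neg at h
    interval_cases sm
    simp at hksm; omega
  have hklt : k < sm := by omega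
  subst hA
  simp only [Matrix.mul_apply, Matrix.of_apply]
  calc ∑ j, (∑ n, lagrangeBasis cm n (cl i) * Amm n j) * cm j ^ (k - 1)
      = ∑ n, lagrangeBasis cm n (cl i) * ∑ j, Amm n j * cm j ^ (k - 1) := by
        simp_rw [Finset.sum_mul, mul_assoc, Finset.mul_sum]
        rw [Finset.sum_comm]
    _ = ∑ n, lagrangeBasis cm n (cl i) * (cm n ^ k / k) := by
        refine Finset.sum_congr rfl fun n _ => by rw [hC n k hk1 hkη]
    _ = (∑ n, lagrangeBasis cm n (cl i) * cm n ^ k) / k := by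
        rw [Finset.sum_div]
        refine Finset.sum_congr rfl fun n _ => by ring
    _ = (cl i) ^ k / k := by rw [lagrange_exact cm hcm k hklt]
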